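/- arXiv:1007.3944 — 2 statements merged into one kernel-verified Lean document; each statement's English description precedes it below -/
import Mathlib

section
/- For any field K, any n, m ∈ ℕ, q ≥ 2, and 0 ≤ d ≤ n², the minimal dimension of the q-th graded component over all quadratic K-algebras with mn generators and m²d relations is at most m^q times the minimal dimension of the q-th component over quadratic K-algebras with n generators and d relations: h_q(K, mn, m²d) ≤ m^q · h_q(K, n, d). -/
open TensorProduct

namespace GS

variable (K : Type*) [Field K] (V : Type*) [AddCommGroup V] [Module K V]

/-- The tensor product of two subspaces, as a subspace of the tensor product. -/
noncomputable def tsub {M N : Type*} [AddCommGroup M] [Module K M] [AddCommGroup N] [Module K N]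
    (A : Submodule K M) (B : Submodule K N) : Submodule K (M ⊗[K] N) :=
  LinearMap.range (TensorProduct.map A.subtype B.subtype)

/-- `V ≃ V^{⊗1}`. -/
noncomputable def pow1 : V ≃ₗ[K] ⨂[K]^1 V :=
  (PiTensorProduct.subsingletonEquiv (s := fun _ => V) (0 : Fin 1)).symm

/-- `V ⊗ V ≃ V^{⊗2}`. -/
noncomputable def pow2 : (V ⊗[K] V) ≃ₗ[K] ⨂[K]^2 V :=
  (TensorProduct.congr (pow1 K V) (pow1 K V)).trans
    ((TensorPower.mulEquiv (n := 1) (m := 1)).trans (TensorPower.cast K V (by norm_num)))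

/-- The subspace `V^{⊗a} ⊗ L ⊗ V^{⊗b}` of `V^{⊗(a+(2+b))}`. -/
noncomputable def segAux (a b : ℕ) (L : Submodule K (V ⊗[K] V)) :
    Submodule K (⨂[K]^(a + (2 + b)) V) :=
  Submodule.map (TensorPower.mulEquiv (n := a) (m := 2 + b)).toLinearMap
    (tsub K (⊤ : Submodule K (⨂[K]^a V))
      (Submodule.map (TensorPower.mulEquiv (n := 2) (m := b)).toLinearMap
        (tsub K (L.map (pow2 K V).toLinearMap) (⊤ : Submodule K (⨂[K]^b V)))))

/-- For `j : Fin (q-1)`, the subspace `V^{⊗j} ⊗ L ⊗ V^{⊗(q-2-j)}` of `V^{⊗q}`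
(the `(j+1)`-st shift of `L`). -/
noncomputable def shiftSub (q : ℕ) (L : Submodule K (V ⊗[K] V)) (j : Fin (q - 1)) :
    Submodule K (⨂[K]^q V) :=
  Submodule.map (TensorPower.cast K V (by have := j.2; omega : (j : ℕ) + (2 + (q - 2 - j)) = q)).toLinearMap
    (segAux K V j (q - 2 - j) L)

/-- `E_q(L,V) = ⋂_{j=1}^{q-1} V^{⊗(j-1)} ⊗ L ⊗ V^{⊗(q-1-j)} ⊆ V^{⊗q}`. -/
noncomputable def Eint (q : ℕ) (L : Submodule K (V ⊗[K] V)) : Submodule K (⨂[K]^q V) :=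
  ⨅ j : Fin (q - 1), shiftSub K V q L j

/-- The degree-`q` component of the two-sided ideal generated by the subspace
`M ⊆ V ⊗ V` of quadratic relations: the sum of all shifts `V^{⊗(j-1)} ⊗ M ⊗ V^{⊗(q-1-j)}`. -/
noncomputable def idealComp (q : ℕ) (M : Submodule K (V ⊗[K] V)) : Submodule K (⨂[K]^q V) :=
  ⨆ j : Fin (q - 1), shiftSub K V q M j

/-- The dimension of the degree-`q` component of the quadratic algebra with space of
relations `M ⊆ V ⊗ V` (the quotient of `V^{⊗q}` by the degree-`q` component of the ideal). -/
noncomputable def quadDim (q : ℕ) (M : Submodule K (V ⊗[K] V)) : ℕ :=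
  Module.finrank K ((⨂[K]^q V) ⧸ idealComp K V q M)

/-- `h_q(K,n,d)`: the minimal dimension of the `q`-th graded component over all quadratic
`K`-algebras with `n` generators and `d` (linearly independent) quadratic relations. -/
noncomputable def hq (n d q : ℕ) : ℕ :=
  sInf { h | ∃ M : Submodule K ((Fin n → K) ⊗[K] (Fin n → K)),
      Module.finrank K M = d ∧ quadDim K (Fin n → K) q M = h }

end GS

noncomputable section

namespace GSAux

open PiTensorProduct GS Module

variable {K : Type*} [Field K]
variable {U V W : Type*} [AddCommGroup U] [Module K U] [AddCommGroup V] [Module K V]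
  [AddCommGroup W] [Module K W]

lemma pow1_apply (x : V) : pow1 K V x = tprod K (fun _ : Fin 1 => x) := by
  rw [pow1, LinearEquiv.symm_apply_eq, subsingletonEquiv_apply_tprod]

lemma pow1_symm_tprod (f : Fin 1 → V) : (pow1 K V).symm (tprod K f) = f 0 := by
  simp [pow1]

lemma mulEquiv_tprod {M : Type*} [AddCommGroup M] [Module K M] {na nb : ℕ}
    (a : Fin na → M) (b : Fin nb → M) :
    TensorPower.mulEquiv (R := K) (M := M) (tprod K a ⊗ₜ tprod K b) = tprod K (Fin.append a b) := by
  rw [← TensorPower.gMul_def]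
  exact TensorPower.tprod_mul_tprod K a b

lemma pow2_tmul (x y : V) : pow2 K V (x ⊗ₜ y) = tprod K ![x, y] := by
  simp only [pow2, LinearEquiv.trans_apply, congr_tmul, pow1_apply, mulEquiv_tprod,
    TensorPower.cast_tprod]
  congr 1
  funext i
  fin_cases i <;> simp [Fin.append, Fin.addCases]

/-- The basic building-block equivalence `(⨂^k U) ⊗ (⨂^k V) ≃ ⨂^k (U ⊗ V) ≃ ⨂^k W`. -/
def psi (ee : U ⊗[K] V ≃ₗ[K] W) : (k : ℕ) → ((⨂[K]^k U) ⊗[K] (⨂[K]^k V)) ≃ₗ[K] ⨂[K]^k W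
  | 0 => (TensorProduct.congr (isEmptyEquiv (Fin 0)) (isEmptyEquiv (Fin 0))).trans
      ((TensorProduct.lid K K).trans (isEmptyEquiv (Fin 0)).symm)
  | (k+1) =>
      (TensorProduct.congr (TensorPower.mulEquiv (n := k) (m := 1)).symm
          (TensorPower.mulEquiv (n := k) (m := 1)).symm).trans <|
        (tensorTensorTensorComm K _ _ _ _).trans <|
          (TensorProduct.congr (psi ee k)
              ((TensorProduct.congr (pow1 K U).symm (pow1 K V).symm).trans
                (ee.trans (pow1 K W)))).trans
            (TensorPower.mulEquiv (n := k) (m := 1))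

lemma psi_tprod (ee : U ⊗[K] V ≃ₗ[K] W) (k : ℕ) (u : Fin k → U) (v : Fin k → V) :
    psi ee k (tprod K u ⊗ₜ tprod K v) = tprod K (fun i => ee (u i ⊗ₜ v i)) := by
  induction k with
  | zero =>
      simp only [psi, LinearEquiv.trans_apply, congr_tmul, isEmptyEquiv_apply_tprod,
        lid_tmul, one_smul, isEmptyEquiv_symm_apply, one_smul]
      congr 1
      funext i
      exact i.elim0
  | succ k ih =>
      have hu : tprod K u = TensorPower.mulEquiv (R := K)
          (tprod K (Fin.init u) ⊗ₜ tprod K (fun _ : Fin 1 => u (Fin.last k))) := by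
        rw [mulEquiv_tprod, Fin.append_right_eq_snoc, Fin.snoc_init_self]
      have hv : tprod K v = TensorPower.mulEquiv (R := K)
          (tprod K (Fin.init v) ⊗ₜ tprod K (fun _ : Fin 1 => v (Fin.last k))) := by
        rw [mulEquiv_tprod, Fin.append_right_eq_snoc, Fin.snoc_init_self]
      rw [hu, hv]
      simp only [psi, LinearEquiv.trans_apply, congr_tmul, LinearEquiv.symm_apply_apply]
      simp only [tensorTensorTensorComm_tmul, congr_tmul, LinearEquiv.trans_apply, ih,
        pow1_symm_tprod, pow1_apply, mulEquiv_tprod]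
      congr 1
      funext i
      rw [Fin.append_right_eq_snoc]
      refine Fin.lastCases ?_ (fun j => ?_) i
      · simp
      · simp [Fin.snoc_castSucc, Fin.init]

lemma psi_mul (ee : U ⊗[K] V ≃ₗ[K] W) (a b : ℕ) (x₁ : ⨂[K]^a U) (x₂ : ⨂[K]^b U)
    (y₁ : ⨂[K]^a V) (y₂ : ⨂[K]^b V) :
    psi ee (a + b) (TensorPower.mulEquiv (x₁ ⊗ₜ x₂) ⊗ₜ TensorPower.mulEquiv (y₁ ⊗ₜ y₂)) =
      TensorPower.mulEquiv (psi ee a (x₁ ⊗ₜ y₁) ⊗ₜ psi ee b (x₂ ⊗ₜ y₂)) := by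
  have key : (psi ee (a + b)).toLinearMap ∘ₗ
        (TensorProduct.map (TensorPower.mulEquiv (n := a) (m := b)).toLinearMap
          (TensorPower.mulEquiv (n := a) (m := b)).toLinearMap) ∘ₗ
        (tensorTensorTensorComm K (⨂[K]^a U) (⨂[K]^a V) (⨂[K]^b U) (⨂[K]^b V)).toLinearMap
      = (TensorPower.mulEquiv (n := a) (m := b)).toLinearMap ∘ₗ
        TensorProduct.map (psi ee a).toLinearMap (psi ee b).toLinearMap := by
    ext u₁ v₁ u₂ v₂
    simp only [LinearMap.comp_apply, LinearMap.compMultilinearMap_apply, LinearEquiv.coe_coe,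
      TensorProduct.map_tmul, tensorTensorTensorComm_tmul, mulEquiv_tprod, psi_tprod,
      TensorProduct.AlgebraTensorModule.curry_apply, TensorProduct.curry_apply,
      LinearMap.coe_restrictScalars]
    congr 1
    funext i
    refine Fin.addCases (fun j => ?_) (fun j => ?_) i <;>
      simp [Fin.append_left, Fin.append_right]
  have h2 := LinearMap.congr_fun key ((x₁ ⊗ₜ y₁) ⊗ₜ (x₂ ⊗ₜ y₂))
  simpa only [LinearMap.comp_apply, LinearEquiv.coe_coe, tensorTensorTensorComm_tmul,
    TensorProduct.map_tmul] using h2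

lemma psi_cast' (ee : U ⊗[K] V ≃ₗ[K] W) {i j : ℕ} (h h' : i = j)
    (x : ⨂[K]^i U) (y : ⨂[K]^i V) :
    psi ee j (TensorPower.cast K U h x ⊗ₜ TensorPower.cast K V h' y) =
      TensorPower.cast K W h (psi ee i (x ⊗ₜ y)) := by
  subst h
  simp

/-- The equivalence `(U ⊗ U) ⊗ (V ⊗ V) ≃ W ⊗ W` used to build the relation space. -/
def xi (ee : U ⊗[K] V ≃ₗ[K] W) : ((U ⊗[K] U) ⊗[K] (V ⊗[K] V)) ≃ₗ[K] (W ⊗[K] W) :=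
  (tensorTensorTensorComm K U U V V).trans (TensorProduct.congr ee ee)

lemma psi2_pow2 (ee : U ⊗[K] V ≃ₗ[K] W) (x : U ⊗[K] U) (μ : V ⊗[K] V) :
    psi ee 2 (pow2 K U x ⊗ₜ pow2 K V μ) = pow2 K W (xi ee (x ⊗ₜ μ)) := by
  have key : (psi ee 2).toLinearMap ∘ₗ
        TensorProduct.map (pow2 K U).toLinearMap (pow2 K V).toLinearMap
      = (pow2 K W).toLinearMap ∘ₗ (xi ee).toLinearMap := by
    ext x₁ x₂ y₁ y₂
    simp only [LinearMap.comp_apply, LinearMap.compMultilinearMap_apply, LinearEquiv.coe_coe,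
      TensorProduct.map_tmul, pow2_tmul, psi_tprod, xi, LinearEquiv.trans_apply,
      tensorTensorTensorComm_tmul, congr_tmul,
      TensorProduct.AlgebraTensorModule.curry_apply, TensorProduct.curry_apply,
      LinearMap.coe_restrictScalars]
    congr 1
    funext i
    fin_cases i <;> simp
  have h2 := LinearMap.congr_fun key (x ⊗ₜ μ)
  simpa only [LinearMap.comp_apply, LinearEquiv.coe_coe, TensorProduct.map_tmul] using h2

lemma tmul_mem_tsub {M N : Type*} [AddCommGroup M] [Module K M] [AddCommGroup N] [Module K N]
    {A : Submodule K M} {B : Submodule K N} {a : M} {b : N} (ha : a ∈ A) (hb : b ∈ B) :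
    a ⊗ₜ b ∈ tsub K A B :=
  ⟨(⟨a, ha⟩ : A) ⊗ₜ (⟨b, hb⟩ : B), rfl⟩

lemma span_triple_top {A B C : Type*} [AddCommGroup A] [Module K A] [AddCommGroup B] [Module K B]
    [AddCommGroup C] [Module K C] :
    Submodule.span K {w : A ⊗[K] (B ⊗[K] C) | ∃ x y z, x ⊗ₜ (y ⊗ₜ z) = w} = ⊤ := by
  rw [eq_top_iff]
  rintro w -
  induction w using TensorProduct.induction_on with
  | zero => exact zero_mem _
  | add w₁ w₂ h₁ h₂ => exact add_mem h₁ h₂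
  | tmul x y =>
      induction y using TensorProduct.induction_on with
      | zero => rw [tmul_zero]; exact zero_mem _
      | add y₁ y₂ h₁ h₂ => rw [tmul_add]; exact add_mem h₁ h₂
      | tmul y z => exact Submodule.subset_span ⟨x, y, z, rfl⟩

lemma mem_span_triple {A B C D : Type*} [AddCommGroup A] [Module K A] [AddCommGroup B] [Module K B]
    [AddCommGroup C] [Module K C] [AddCommGroup D] [Module K D]
    (G : (A ⊗[K] (B ⊗[K] C)) ≃ₗ[K] D) (t : D) :
    t ∈ Submodule.span K {w : D | ∃ x y z, G (x ⊗ₜ (y ⊗ₜ z)) = w} := by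
  have hs : {w : D | ∃ x y z, G (x ⊗ₜ (y ⊗ₜ z)) = w} =
      ⇑G '' {w | ∃ x y z, x ⊗ₜ (y ⊗ₜ z) = w} := by
    ext w
    constructor
    · rintro ⟨x, y, z, rfl⟩; exact ⟨x ⊗ₜ (y ⊗ₜ z), ⟨x, y, z, rfl⟩, rfl⟩
    · rintro ⟨w', ⟨x, y, z, rfl⟩, rfl⟩; exact ⟨x, y, z, rfl⟩
  rw [hs, ← LinearEquiv.coe_coe, ← Submodule.map_span, span_triple_top, Submodule.map_top]
  exact ⟨G.symm t, by simp⟩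

lemma tsub_top_iSup_le {M N : Type*} [AddCommGroup M] [Module K M] [AddCommGroup N] [Module K N]
    {ι : Sort*} (P : ι → Submodule K N) :
    tsub K (⊤ : Submodule K M) (⨆ i, P i) ≤ ⨆ i, tsub K (⊤ : Submodule K M) (P i) := by
  rw [tsub, TensorProduct.range_map_eq_span_tmul, Submodule.span_le]
  rintro _ ⟨a, x, rfl⟩
  simp only [Submodule.coe_subtype]
  refine Submodule.iSup_induction (motive := fun y : N => (a : M) ⊗ₜ y ∈ ⨆ i, tsub K ⊤ (P i))
    P x.2 (fun i y hy => ?_) ?_ (fun y z hy hz => ?_)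
  · exact Submodule.mem_iSup_of_mem i (tmul_mem_tsub Submodule.mem_top hy)
  · show (a : M) ⊗ₜ[K] (0 : N) ∈ _
    rw [tmul_zero]; exact zero_mem _
  · show (a : M) ⊗ₜ[K] (y + z) ∈ _
    rw [tmul_add]; exact add_mem hy hz

lemma tpow_fd (V : Type*) [AddCommGroup V] [Module K V] [FiniteDimensional K V] :
    ∀ k : ℕ, FiniteDimensional K (⨂[K]^k V)
  | 0 => LinearEquiv.finiteDimensional (isEmptyEquiv (Fin 0) : (⨂[K]^0 V) ≃ₗ[K] K).symm
  | (k+1) => by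
      haveI := tpow_fd V k
      haveI : FiniteDimensional K (⨂[K]^1 V) := LinearEquiv.finiteDimensional (pow1 K V)
      exact LinearEquiv.finiteDimensional
        (TensorPower.mulEquiv (n := k) (m := 1) : _ ≃ₗ[K] ⨂[K]^(k+1) V)

lemma finrank_tpow (V : Type*) [AddCommGroup V] [Module K V] [FiniteDimensional K V] :
    ∀ k : ℕ, finrank K (⨂[K]^k V) = finrank K V ^ k
  | 0 => by
      rw [(isEmptyEquiv (Fin 0) : (⨂[K]^0 V) ≃ₗ[K] K).finrank_eq, finrank_self, pow_zero]
  | (k+1) => by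
      haveI := tpow_fd (K := K) V k
      rw [← (TensorPower.mulEquiv (n := k) (m := 1) : _ ≃ₗ[K] ⨂[K]^(k+1) V).finrank_eq,
        Module.finrank_tensorProduct, ← (pow1 K V).finrank_eq, finrank_tpow V k, pow_succ]

lemma finrank_tsub {M N : Type*} [AddCommGroup M] [Module K M] [AddCommGroup N] [Module K N]
    (A : Submodule K M) (B : Submodule K N) :
    finrank K (tsub K A B) = finrank K A * finrank K B := by
  have hinj : Function.Injective (TensorProduct.map A.subtype B.subtype) := by
    rw [← LinearMap.lTensor_comp_rTensor]
    exact (Module.Flat.lTensor_preserves_injective_linearMap _ B.injective_subtype).comp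
      (Module.Flat.rTensor_preserves_injective_linearMap _ A.injective_subtype)
  rw [tsub, LinearMap.finrank_range_of_inj hinj, Module.finrank_tensorProduct]

lemma finrank_map_equiv {M N : Type*} [AddCommGroup M] [Module K M] [AddCommGroup N]
    [Module K N] (f : M ≃ₗ[K] N) (p : Submodule K M) :
    finrank K (Submodule.map f.toLinearMap p) = finrank K p :=
  (Submodule.equivMapOfInjective f.toLinearMap f.injective p).finrank_eq.symm

set_option maxHeartbeats 2000000 in
lemma perj (ee : U ⊗[K] V ≃ₗ[K] W) (M : Submodule K (V ⊗[K] V)) (q : ℕ) (j : Fin (q - 1)) :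
    Submodule.map (psi ee q).toLinearMap
        (tsub K (⊤ : Submodule K (⨂[K]^q U)) (shiftSub K V q M j)) ≤
      shiftSub K W q (Submodule.map (xi ee).toLinearMap (tsub K ⊤ M)) j := by
  have h : (j : ℕ) + (2 + (q - 2 - (j : ℕ))) = q := by have := j.2; omega
  rintro _ ⟨x, hx, rfl⟩
  obtain ⟨w, rfl⟩ := hx
  induction w using TensorProduct.induction_on with
  | zero => simpa using zero_mem _
  | add w₁ w₂ h₁ h₂ =>
      rw [map_add, map_add]; exact add_mem h₁ h₂
  | tmul t x =>
    rw [TensorProduct.map_tmul]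
    simp only [Submodule.coe_subtype, LinearEquiv.coe_coe]
    obtain ⟨c, hc, hce⟩ := Submodule.mem_map.mp x.2
    rw [← hce]
    obtain ⟨y, hy, rfl⟩ := Submodule.mem_map.mp hc
    obtain ⟨w₂, rfl⟩ := hy
    clear hc hce
    induction w₂ using TensorProduct.induction_on with
    | zero => simp only [map_zero, tmul_zero]; exact zero_mem _
    | add v₁ v₂ h₁ h₂ =>
        simp only [map_add, tmul_add]; exact add_mem h₁ h₂
    | tmul p y =>
      rw [TensorProduct.map_tmul]
      simp only [Submodule.coe_subtype]
      obtain ⟨c₃, hc₃, hce₃⟩ := Submodule.mem_map.mp y.2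
      rw [← hce₃]
      obtain ⟨w₃, rfl⟩ := hc₃
      clear hce₃
      induction w₃ using TensorProduct.induction_on with
      | zero => simp only [map_zero, tmul_zero, tmul_zero]; exact zero_mem _
      | add v₁ v₂ h₁ h₂ =>
          simp only [map_add, tmul_add]; exact add_mem h₁ h₂
      | tmul l s =>
        rw [TensorProduct.map_tmul]
        simp only [Submodule.coe_subtype]
        obtain ⟨μ, hμ, hμe⟩ := l.2
        rw [← hμe]
        -- now reduce the left factor to a spanning set
        let G : ((⨂[K]^(j : ℕ) U) ⊗[K] ((⨂[K]^2 U) ⊗[K] (⨂[K]^(q - 2 - (j : ℕ)) U)))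
            ≃ₗ[K] ⨂[K]^q U :=
          (TensorProduct.congr (LinearEquiv.refl K _)
              (TensorPower.mulEquiv (n := 2) (m := q - 2 - (j : ℕ)))).trans
            ((TensorPower.mulEquiv (n := (j : ℕ)) (m := 2 + (q - 2 - (j : ℕ)))).trans
              (TensorPower.cast K U h))
        refine Submodule.span_induction ?_ ?_ ?_ ?_ (mem_span_triple G (t : ⨂[K]^q U))
        · rintro _ ⟨r₁, z, r₃, rfl⟩
          obtain ⟨x₀, rfl⟩ : ∃ x₀, z = pow2 K U x₀ :=
            ⟨(pow2 K U).symm z, by simp⟩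
          have eG : G (r₁ ⊗ₜ (pow2 K U x₀ ⊗ₜ r₃)) =
              TensorPower.cast K U h (TensorPower.mulEquiv
                (r₁ ⊗ₜ TensorPower.mulEquiv (pow2 K U x₀ ⊗ₜ r₃))) := by
            simp [G]
          rw [eG]
          simp only [LinearEquiv.coe_coe]
          rw [psi_cast', psi_mul, psi_mul, psi2_pow2]
          exact Submodule.mem_map_of_mem (Submodule.mem_map_of_mem
            (tmul_mem_tsub Submodule.mem_top (Submodule.mem_map_of_mem
              (tmul_mem_tsub (Submodule.mem_map_of_mem
                (Submodule.mem_map_of_mem (tmul_mem_tsub Submodule.mem_top hμ)))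
                Submodule.mem_top))))
        · rw [zero_tmul, map_zero]; exact zero_mem _
        · intro u₁ u₂ hu₁ hu₂ p₁ p₂
          rw [add_tmul, map_add]; exact add_mem p₁ p₂
        · intro c u₁ hu₁ p₁
          rw [← smul_tmul', map_smul]; exact Submodule.smul_mem _ _ p₁

end GSAux
end

/-- For any field `K`, `n, m ∈ ℕ`, `q ≥ 2` and `0 ≤ d ≤ n²`,
`h_q(K, mn, m²d) ≤ m^q · h_q(K, n, d)`. -/
theorem hq_mul_le (K : Type*) [Field K] (n m q d : ℕ) (hq2 : 2 ≤ q) (hd : d ≤ n ^ 2) :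
    GS.hq K (m * n) (m ^ 2 * d) q ≤ m ^ q * GS.hq K n d q := by
  classical
  haveI : Module.Finite K ((Fin m → K) ⊗[K] (Fin n → K)) := Module.Finite.tensorProduct K _ _
  let ee : ((Fin m → K) ⊗[K] (Fin n → K)) ≃ₗ[K] (Fin (m * n) → K) :=
    LinearEquiv.ofFinrankEq _ _ (by
      simp [Module.finrank_tensorProduct, Module.finrank_fin_fun])
  -- the defining set for `hq K n d q` is nonempty
  have hd' : d ≤ Module.finrank K ((Fin n → K) ⊗[K] (Fin n → K)) := by
    simpa [Module.finrank_tensorProduct, Module.finrank_fin_fun, pow_two] using hd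
  let bb := Module.finBasis K ((Fin n → K) ⊗[K] (Fin n → K))
  have hli : LinearIndependent K (⇑bb ∘ Fin.castLE hd') :=
    bb.linearIndependent.comp _ (Fin.castLE_injective hd')
  have hM₀ : Module.finrank K (Submodule.span K (Set.range (⇑bb ∘ Fin.castLE hd'))) = d := by
    rw [finrank_span_eq_card hli, Fintype.card_fin]
  obtain ⟨M, hMd, hMq⟩ : ∃ M : Submodule K ((Fin n → K) ⊗[K] (Fin n → K)),
      Module.finrank K M = d ∧ GS.quadDim K (Fin n → K) q M = GS.hq K n d q := by
    have := Nat.sInf_mem (s := { h | ∃ M : Submodule K ((Fin n → K) ⊗[K] (Fin n → K)),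
      Module.finrank K M = d ∧ GS.quadDim K (Fin n → K) q M = h }) ⟨_, _, hM₀, rfl⟩
    exact this
  set M' : Submodule K ((Fin (m * n) → K) ⊗[K] (Fin (m * n) → K)) :=
    Submodule.map (GSAux.xi ee).toLinearMap (GS.tsub K ⊤ M) with hM'def
  have hM'd : Module.finrank K M' = m ^ 2 * d := by
    have h0 := GSAux.finrank_map_equiv (K := K)
      (M := ((Fin m → K) ⊗[K] (Fin m → K)) ⊗[K] ((Fin n → K) ⊗[K] (Fin n → K)))
      (N := (Fin (m * n) → K) ⊗[K] (Fin (m * n) → K))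
      (GSAux.xi ee) (GS.tsub K ⊤ M)
    rw [hM'def, h0, GSAux.finrank_tsub, finrank_top,
      Module.finrank_tensorProduct, Module.finrank_fin_fun, hMd, pow_two]
  have step1 : GS.hq K (m * n) (m ^ 2 * d) q ≤ GS.quadDim K (Fin (m * n) → K) q M' :=
    Nat.sInf_le ⟨M', hM'd, rfl⟩
  haveI := GSAux.tpow_fd (K := K) (Fin m → K) q
  haveI := GSAux.tpow_fd (K := K) (Fin n → K) q
  haveI := GSAux.tpow_fd (K := K) (Fin (m * n) → K) q
  have hkey : Submodule.map (GSAux.psi ee q).toLinearMap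
      (GS.tsub K ⊤ (GS.idealComp K (Fin n → K) q M))
        ≤ GS.idealComp K (Fin (m * n) → K) q M' := by
    simp only [GS.idealComp]
    refine le_trans (Submodule.map_mono (GSAux.tsub_top_iSup_le _)) ?_
    rw [Submodule.map_iSup]
    exact iSup_mono fun j => GSAux.perj ee M q j
  have hrank : m ^ q * Module.finrank K (GS.idealComp K (Fin n → K) q M)
      ≤ Module.finrank K (GS.idealComp K (Fin (m * n) → K) q M') := by
    have h1 := Submodule.finrank_mono hkey
    have h0 := GSAux.finrank_map_equiv (K := K)
      (M := (⨂[K]^q (Fin m → K)) ⊗[K] (⨂[K]^q (Fin n → K)))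
      (N := ⨂[K]^q (Fin (m * n) → K))
      (GSAux.psi ee q)
      (GS.tsub K (⊤ : Submodule K (⨂[K]^q (Fin m → K))) (GS.idealComp K (Fin n → K) q M))
    rw [h0, GSAux.finrank_tsub, finrank_top, GSAux.finrank_tpow,
      Module.finrank_fin_fun] at h1
    exact h1
  have hqV := Submodule.finrank_quotient_add_finrank (GS.idealComp K (Fin n → K) q M)
  have hqW := Submodule.finrank_quotient_add_finrank (GS.idealComp K (Fin (m * n) → K) q M')
  rw [GSAux.finrank_tpow, Module.finrank_fin_fun] at hqV hqW
  rw [mul_pow] at hqW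
  refine step1.trans ?_
  rw [← hMq]
  have hQV : GS.quadDim K (Fin n → K) q M
      = Module.finrank K ((⨂[K]^q (Fin n → K)) ⧸ GS.idealComp K (Fin n → K) q M) := rfl
  have hQW : GS.quadDim K (Fin (m * n) → K) q M'
      = Module.finrank K
          ((⨂[K]^q (Fin (m * n) → K)) ⧸ GS.idealComp K (Fin (m * n) → K) q M') := rfl
  rw [hQV, hQW]
  have e1 : m ^ q * Module.finrank K ((⨂[K]^q (Fin n → K)) ⧸ GS.idealComp K (Fin n → K) q M)
      + m ^ q * Module.finrank K (GS.idealComp K (Fin n → K) q M) = m ^ q * n ^ q := by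
    rw [← Nat.mul_add, hqV]
  omega
end

section
/- Let K be a field, q ≥ 3, n, m ∈ ℕ, 0 ≤ d ≤ n². If h_q(K, n, d) = 0 (i.e., some quadratic K-algebra with n generators and d quadratic relations has vanishing q-th graded component), then h_q(K, mn, m²d) = 0. -/
open TensorProduct

section Aux

open PiTensorProduct

variable {K : Type*} [Field K] {V V' : Type*} [AddCommGroup V] [Module K V]
  [AddCommGroup V'] [Module K V']

lemma tmul_mem_tsub {M N : Type*} [AddCommGroup M] [Module K M] [AddCommGroup N] [Module K N]
    {A : Submodule K M} {B : Submodule K N} {a : M} {b : N} (ha : a ∈ A) (hb : b ∈ B) :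
    a ⊗ₜ[K] b ∈ GS.tsub K A B :=
  ⟨(⟨a, ha⟩ : A) ⊗ₜ (⟨b, hb⟩ : B), by simp [GS.tsub]⟩

lemma tsub_mono {M N : Type*} [AddCommGroup M] [Module K M] [AddCommGroup N] [Module K N]
    {A A' : Submodule K M} {B B' : Submodule K N} (hA : A ≤ A') (hB : B ≤ B') :
    GS.tsub K A B ≤ GS.tsub K A' B' := by
  rw [GS.tsub, TensorProduct.range_map_eq_span_tmul, Submodule.span_le]
  rintro _ ⟨a, b, rfl⟩
  exact tmul_mem_tsub (hA a.2) (hB b.2)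

lemma map_tsub_le {M N M' N' : Type*} [AddCommGroup M] [Module K M] [AddCommGroup N] [Module K N]
    [AddCommGroup M'] [Module K M'] [AddCommGroup N'] [Module K N']
    (f : M →ₗ[K] M') (g : N →ₗ[K] N') (A : Submodule K M) (B : Submodule K N) :
    (GS.tsub K A B).map (TensorProduct.map f g) ≤ GS.tsub K (A.map f) (B.map g) := by
  rw [GS.tsub, ← LinearMap.range_comp, ← TensorProduct.map_comp,
    TensorProduct.range_map_eq_span_tmul, Submodule.span_le]
  rintro _ ⟨a, b, rfl⟩
  exact tmul_mem_tsub (Submodule.mem_map_of_mem a.2) (Submodule.mem_map_of_mem b.2)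

lemma map_comp_cast {r s : ℕ} (h : r = s) (φ : Fin s → (V →ₗ[K] V')) :
    (PiTensorProduct.map φ) ∘ₗ (TensorPower.cast K V h).toLinearMap
      = (TensorPower.cast K V' h).toLinearMap ∘ₗ
        PiTensorProduct.map (fun i => φ (Fin.cast h i)) := by
  subst h
  ext u
  simp [TensorPower.cast_refl]

lemma map_comp_mulEquiv {r s : ℕ} (ψ : Fin (r + s) → (V →ₗ[K] V')) :
    (PiTensorProduct.map ψ) ∘ₗ (TensorPower.mulEquiv (n := r) (m := s) (M := V)).toLinearMap
      = (TensorPower.mulEquiv (n := r) (m := s) (M := V')).toLinearMap ∘ₗ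
        TensorProduct.map (PiTensorProduct.map (fun i => ψ (Fin.castAdd s i)))
          (PiTensorProduct.map (fun i => ψ (Fin.natAdd r i))) := by
  apply TensorProduct.ext
  ext u t
  simp only [LinearMap.compMultilinearMap_apply, LinearMap.compr₂_apply, LinearMap.compr₂ₛₗ_apply, TensorProduct.mk_apply,
    LinearMap.comp_apply, LinearEquiv.coe_coe, TensorProduct.map_tmul, PiTensorProduct.map_tprod]
  rw [← TensorPower.gMul_def, ← TensorPower.gMul_def, TensorPower.tprod_mul_tprod,
    TensorPower.tprod_mul_tprod, PiTensorProduct.map_tprod]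
  congr 1
  funext i
  refine Fin.addCases (fun i => ?_) (fun i => ?_) i <;>
    simp [Fin.append_left, Fin.append_right]

lemma map_comp_pow2 (φ : Fin 2 → (V →ₗ[K] V')) :
    (PiTensorProduct.map φ) ∘ₗ (GS.pow2 K V).toLinearMap
      = (GS.pow2 K V').toLinearMap ∘ₗ TensorProduct.map (φ 0) (φ 1) := by
  apply TensorProduct.ext'
  intro x y
  simp only [LinearMap.comp_apply, LinearEquiv.coe_coe, TensorProduct.map_tmul, GS.pow2,
    LinearEquiv.trans_apply, TensorProduct.congr_tmul, GS.pow1,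
    PiTensorProduct.subsingletonEquiv_symm_apply]
  rw [← TensorPower.gMul_def, ← TensorPower.gMul_def, TensorPower.tprod_mul_tprod,
    TensorPower.tprod_mul_tprod, TensorPower.cast_tprod, TensorPower.cast_tprod,
    PiTensorProduct.map_tprod]
  congr 1
  funext i
  fin_cases i <;> simp [Fin.append, Fin.addCases, Fin.cast]

lemma map_equiv_eq {A B : Type*} [AddCommGroup A] [Module K A] [AddCommGroup B] [Module K B]
    (e : A ≃ₗ[K] B) (S : Submodule K A) : Submodule.map (e : A →ₗ[K] B) S = Submodule.map e.toLinearMap S := rfl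

/-- image of a submodule under an equiv, then a map, rewritten using a commuting square. -/
lemma map_map_comm {A B C D : Type*} [AddCommGroup A] [Module K A] [AddCommGroup B] [Module K B]
    [AddCommGroup C] [Module K C] [AddCommGroup D] [Module K D]
    (f : A →ₗ[K] B) (g : B →ₗ[K] D) (f' : A →ₗ[K] C) (g' : C →ₗ[K] D)
    (hc : g ∘ₗ f = g' ∘ₗ f') (S : Submodule K A) :
    (S.map f).map g = (S.map f').map g' := by
  rw [← Submodule.map_comp, ← Submodule.map_comp, hc]

lemma map_segAux_le (a b : ℕ) (M : Submodule K (V ⊗[K] V)) (M' : Submodule K (V' ⊗[K] V'))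
    (ψ : Fin (a + (2 + b)) → (V →ₗ[K] V'))
    (hM : ∀ i j, M.map (TensorProduct.map (ψ i) (ψ j)) ≤ M') :
    (GS.segAux K V a b M).map (PiTensorProduct.map ψ) ≤ GS.segAux K V' a b M' := by
  rw [GS.segAux, GS.segAux]
  set ψ₁ : Fin a → (V →ₗ[K] V') := fun i => ψ (Fin.castAdd (2 + b) i) with hψ₁
  set ψ₂ : Fin (2 + b) → (V →ₗ[K] V') := fun i => ψ (Fin.natAdd a i) with hψ₂
  set ψ₂₁ : Fin 2 → (V →ₗ[K] V') := fun i => ψ₂ (Fin.castAdd b i) with hψ₂₁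
  set ψ₂₂ : Fin b → (V →ₗ[K] V') := fun i => ψ₂ (Fin.natAdd 2 i) with hψ₂₂
  rw [map_equiv_eq, map_equiv_eq, map_equiv_eq, map_equiv_eq,
    map_map_comm (K := K)
      (TensorPower.mulEquiv (n := a) (m := 2 + b) (M := V)).toLinearMap
      (PiTensorProduct.map ψ)
      (TensorProduct.map (PiTensorProduct.map ψ₁) (PiTensorProduct.map ψ₂))
      (TensorPower.mulEquiv (n := a) (m := 2 + b) (M := V')).toLinearMap
      (map_comp_mulEquiv ψ)]
  apply Submodule.map_mono
  refine le_trans (map_tsub_le _ _ _ _) (tsub_mono le_top ?_)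
  rw [map_map_comm (K := K)
      (TensorPower.mulEquiv (n := 2) (m := b) (M := V)).toLinearMap
      (PiTensorProduct.map ψ₂)
      (TensorProduct.map (PiTensorProduct.map ψ₂₁) (PiTensorProduct.map ψ₂₂))
      (TensorPower.mulEquiv (n := 2) (m := b) (M := V')).toLinearMap
      (map_comp_mulEquiv ψ₂)]
  apply Submodule.map_mono
  refine le_trans (map_tsub_le _ _ _ _) (tsub_mono ?_ le_top)
  rw [map_map_comm (K := K) (GS.pow2 K V).toLinearMap (PiTensorProduct.map ψ₂₁)
      (TensorProduct.map (ψ₂₁ 0) (ψ₂₁ 1)) (GS.pow2 K V').toLinearMap (map_comp_pow2 ψ₂₁)]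
  exact Submodule.map_mono (hM _ _)

lemma map_shiftSub_le (q : ℕ) (M : Submodule K (V ⊗[K] V)) (M' : Submodule K (V' ⊗[K] V'))
    (φ : Fin q → (V →ₗ[K] V'))
    (hM : ∀ i j, M.map (TensorProduct.map (φ i) (φ j)) ≤ M') (j : Fin (q - 1)) :
    (GS.shiftSub K V q M j).map (PiTensorProduct.map φ) ≤ GS.shiftSub K V' q M' j := by
  have h : (j : ℕ) + (2 + (q - 2 - j)) = q := by have := j.2; omega
  rw [GS.shiftSub, GS.shiftSub, map_equiv_eq, map_equiv_eq,
    map_map_comm (K := K) (TensorPower.cast K V h).toLinearMap (PiTensorProduct.map φ)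
      (PiTensorProduct.map (fun i => φ (Fin.cast h i))) (TensorPower.cast K V' h).toLinearMap
      (map_comp_cast h φ)]
  exact Submodule.map_mono (map_segAux_le _ _ _ _ _ (fun i j => hM _ _))

end Aux

section Main

open PiTensorProduct

variable {K : Type*} [Field K]

lemma tpow_finite {V : Type*} [AddCommGroup V] [Module K V] [Module.Finite K V] (q : ℕ) :
    Module.Finite K (⨂[K]^q V) := by
  induction q with
  | zero => exact Module.Finite.equiv (PiTensorProduct.isEmptyEquiv (Fin 0)).symm
  | succ r ih =>
    haveI := ih
    haveI : Module.Finite K (⨂[K]^1 V) := Module.Finite.equiv (GS.pow1 K V)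
    exact Module.Finite.equiv (TensorPower.mulEquiv (n := r) (m := 1) (M := V))

end Main

lemma exists_relations {K : Type*} [Field K] {W Vt V2 : Type*}
    [AddCommGroup W] [Module K W] [AddCommGroup Vt] [Module K Vt]
    [AddCommGroup V2] [Module K V2]
    [Module.Finite K W] [Module.Finite K Vt]
    (q : ℕ) (e : V2 ≃ₗ[K] W ⊗[K] Vt) (M : Submodule K (Vt ⊗[K] Vt))
    (hid : GS.idealComp K Vt q M = ⊤) :
    ∃ M' : Submodule K (V2 ⊗[K] V2),
      Module.finrank K M' = Module.finrank K W * Module.finrank K W * Module.finrank K M ∧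
      GS.idealComp K V2 q M' = ⊤ := by
  classical
  open PiTensorProduct in
  let bW : Module.Basis _ K W := Module.finBasis K W
  let bV : Module.Basis _ K Vt := Module.finBasis K Vt
  let gE : (W ⊗[K] W) ⊗[K] (Vt ⊗[K] Vt) ≃ₗ[K] V2 ⊗[K] V2 :=
    (TensorProduct.tensorTensorTensorComm K W W Vt Vt).trans (TensorProduct.congr e e).symm
  refine ⟨(GS.tsub K (⊤ : Submodule K (W ⊗[K] W)) M).map gE.toLinearMap, ?_, ?_⟩
  · have h1 : Module.finrank K ((GS.tsub K (⊤ : Submodule K (W ⊗[K] W)) M).map gE.toLinearMap)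
        = Module.finrank K (GS.tsub K (⊤ : Submodule K (W ⊗[K] W)) M) :=
      LinearEquiv.finrank_map_eq gE _
    have hinj : Function.Injective
        (TensorProduct.map (Submodule.subtype (⊤ : Submodule K (W ⊗[K] W))) M.subtype) :=
      Module.Flat.tensorProduct_mapIncl_injective_of_right _ _
    rw [h1, GS.tsub, LinearMap.finrank_range_of_inj hinj, Module.finrank_tensorProduct,
      finrank_top, Module.finrank_tensorProduct]
  · rw [eq_top_iff, ← PiTensorProduct.span_tprod_eq_top, Submodule.span_le]
    rintro x ⟨f, rfl⟩
    set M' : Submodule K (V2 ⊗[K] V2) :=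
      (GS.tsub K (⊤ : Submodule K (W ⊗[K] W)) M).map gE.toLinearMap with hM'
    let b : Module.Basis _ K V2 := (bW.tensorProduct bV).map e.symm
    have hbmem : ∀ κ : Fin q → _,
        (tprod K fun i => b (κ i)) ∈ GS.idealComp K V2 q M' := by
      intro κ
      let φ : Fin q → (Vt →ₗ[K] V2) :=
        fun i => e.symm.toLinearMap ∘ₗ TensorProduct.mk K W Vt (bW (κ i).1)
      have hφ : ∀ i j, M.map (TensorProduct.map (φ i) (φ j)) ≤ M' := by
        intro i j
        have hc : TensorProduct.map (φ i) (φ j)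
            = gE.toLinearMap ∘ₗ TensorProduct.mk K (W ⊗[K] W) (Vt ⊗[K] Vt)
                (bW (κ i).1 ⊗ₜ bW (κ j).1) := by
          apply TensorProduct.ext'
          intro x y
          simp [φ, gE, TensorProduct.tensorTensorTensorComm_tmul]
        rw [hc, Submodule.map_comp]
        apply Submodule.map_mono
        rintro _ ⟨μ, hμ, rfl⟩
        exact tmul_mem_tsub trivial hμ
      have heq : (tprod K fun i => b (κ i))
          = PiTensorProduct.map φ (tprod K fun i => bV (κ i).2) := by
        rw [PiTensorProduct.map_tprod]
        congr 1
        funext i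
        simp [b, φ, Module.Basis.tensorProduct_apply']
      rw [heq]
      have hmap : (GS.idealComp K Vt q M).map (PiTensorProduct.map φ)
          ≤ GS.idealComp K V2 q M' := by
        rw [GS.idealComp, Submodule.map_iSup]
        exact iSup_le fun j => le_trans (map_shiftSub_le q M M' φ hφ j) (le_iSup _ j)
      exact hmap (Submodule.mem_map_of_mem (by rw [hid]; exact trivial))
    have hf : f = fun i => ∑ k, b.repr (f i) k • b k :=
      funext fun i => (b.sum_repr (f i)).symm
    rw [hf, MultilinearMap.map_sum]
    apply Submodule.sum_mem
    intro κ _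
    rw [MultilinearMap.map_smul_univ]
    exact Submodule.smul_mem _ _ (hbmem κ)

/-- If `q ≥ 3`, `0 ≤ d ≤ n²` and `h_q(K, n, d) = 0`, then
`h_q(K, mn, m²d) = 0`. -/
theorem hq_mul_eq_zero (K : Type*) [Field K] (n m q d : ℕ) (hq3 : 3 ≤ q) (hd : d ≤ n ^ 2)
    (h : GS.hq K n d q = 0) : GS.hq K (m * n) (m ^ 2 * d) q = 0 := by
  classical
  have hdn : d ≤ n * n := by nlinarith
  have hne : { h | ∃ M : Submodule K ((Fin n → K) ⊗[K] (Fin n → K)),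
      Module.finrank K M = d ∧ GS.quadDim K (Fin n → K) q M = h }.Nonempty := by
    let B := (((Pi.basisFun K (Fin n)).tensorProduct (Pi.basisFun K (Fin n))).reindex
      finProdFinEquiv)
    refine ⟨_, Submodule.span K (Set.range (B ∘ Fin.castLE hdn)), ?_, rfl⟩
    rw [finrank_span_eq_card (B.linearIndependent.comp _ (Fin.castLE_injective hdn))]
    simp
  obtain ⟨M, hMd, hM0⟩ : ∃ M : Submodule K ((Fin n → K) ⊗[K] (Fin n → K)),
      Module.finrank K M = d ∧ GS.quadDim K (Fin n → K) q M = 0 := by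
    rcases Nat.sInf_eq_zero.mp h with h0 | hemp
    · exact h0
    · rw [hemp] at hne; exact absurd hne (by simp)
  haveI : Module.Finite K (⨂[K]^q (Fin n → K)) := tpow_finite q
  have hid : GS.idealComp K (Fin n → K) q M = ⊤ := by
    rw [GS.quadDim] at hM0
    exact Submodule.Quotient.subsingleton_iff.mp (Module.finrank_zero_iff.mp hM0)
  have e : (Fin (m * n) → K) ≃ₗ[K] (Fin m → K) ⊗[K] (Fin n → K) :=
    (Pi.basisFun K (Fin (m * n))).equiv
      ((Pi.basisFun K (Fin m)).tensorProduct (Pi.basisFun K (Fin n))) finProdFinEquiv.symm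
  obtain ⟨M', hfr, hid'⟩ := exists_relations q e M hid
  apply Nat.sInf_eq_zero.mpr
  left
  refine ⟨M', ?_, ?_⟩
  · rw [hfr, hMd, show Module.finrank K (Fin m → K) = m by simp]
    ring
  · rw [GS.quadDim, hid']
    haveI : Subsingleton ((⨂[K]^q (Fin (m * n) → K)) ⧸
        (⊤ : Submodule K (⨂[K]^q (Fin (m * n) → K)))) :=
      Submodule.Quotient.subsingleton_iff.mpr rfl
    exact Module.finrank_zero_of_subsingleton
end
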